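/- Completeness of SCmin and SCmax: if a formula φ of L_D is valid in every minimal simplicial model, then φ is provable in SCmin; and if φ is valid in every maximal simplicial model, then φ is provable in SCmax. -/

import Mathlib

attribute [local instance] Classical.propDecidable

noncomputable section

/-- Formulas of the epistemic language `L_D` with distributed knowledge `D_B`
for nonempty groups `B` of agents. -/
inductive Form (A AP : Type) : Type
  | atom : AP → Form A AP
  | neg  : Form A AP → Form A AP
  | and  : Form A AP → Form A AP → Form A AP
  | dk   : (B : Finset A) → B.Nonempty → Form A AP → Form A AP

namespace Form

variable {A AP : Type}

/-- Disjunction, `φ ∨ ψ := ¬(¬φ ∧ ¬ψ)`. -/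
def or (φ ψ : Form A AP) : Form A AP := neg ((neg φ).and (neg ψ))

/-- Implication, `φ ⇒ ψ := ¬φ ∨ ψ`. -/
def imp (φ ψ : Form A AP) : Form A AP := (neg φ).or ψ

/-- `⊤ := p ∨ ¬p`. -/
def verum [Nonempty AP] : Form A AP :=
  (atom (Classical.arbitrary AP)).or (neg (atom (Classical.arbitrary AP)))

/-- `⊥ := ¬⊤`. -/
def falsum [Nonempty AP] : Form A AP := neg verum

/-- Individual knowledge `K_a φ := D_{{a}} φ`. -/
def K (a : A) (φ : Form A AP) : Form A AP := dk {a} (Finset.singleton_nonempty a) φ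

/-- `dead_a := K_a ⊥`. -/
def deadAgent [Nonempty AP] (a : A) : Form A AP := K a falsum

/-- `alive_a := ¬dead_a`. -/
def aliveAgent [Nonempty AP] (a : A) : Form A AP := (deadAgent a).neg

/-- `alive_B := ¬ D_B ⊥`. -/
def aliveGrp [Nonempty AP] (B : Finset A) (hB : B.Nonempty) : Form A AP := (dk B hB falsum).neg

/-- Finite conjunction. -/
def bigAnd [Nonempty AP] : List (Form A AP) → Form A AP
  | [] => verum
  | φ :: t => φ.and (bigAnd t)

/-- Finite disjunction. -/
def bigOr [Nonempty AP] : List (Form A AP) → Form A AP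
  | [] => falsum
  | φ :: t => φ.or (bigOr t)

/-- `dead_C := ⋀_{a ∈ C} dead_a`. -/
def deadGrp [Nonempty AP] (C : Finset A) : Form A AP := bigAnd (C.toList.map deadAgent)

end Form

/-- A propositional tautology: true under every assignment that interprets `¬` and `∧`
classically (atoms and `D_B`-formulas are treated as opaque). -/
def IsTaut {A AP : Type} (φ : Form A AP) : Prop :=
  ∀ v : Form A AP → Prop,
    (∀ ψ : Form A AP, v ψ.neg ↔ ¬ v ψ) →
    (∀ ψ χ : Form A AP, v (ψ.and χ) ↔ (v ψ ∧ v χ)) →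
    v φ

theorem unionNE {α : Type} [DecidableEq α] {s t : Finset α} (h : s.Nonempty) :
    (s ∪ t).Nonempty :=
  ⟨h.choose, Finset.mem_union_left _ h.choose_spec⟩

section ProofSystem

variable {A AP : Type} [Fintype A] [Nonempty AP]

/-- The proof system `SC` (axioms `K`, `B`, `4`, `Mono`, `Union`, `NE`, `P`, all
propositional tautologies, modus ponens and necessitation), extended by an arbitrary
additional set `Ax` of axioms. -/
inductive Prf (Ax : Form A AP → Prop) : Form A AP → Prop
  | taut {φ : Form A AP} : IsTaut φ → Prf Ax φ
  | mp {φ ψ : Form A AP} : Prf Ax (φ.imp ψ) → Prf Ax φ → Prf Ax ψ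
  | nec {φ : Form A AP} (B : Finset A) (hB : B.Nonempty) :
      Prf Ax φ → Prf Ax (Form.dk B hB φ)
  | axK {φ ψ : Form A AP} (B : Finset A) (hB : B.Nonempty) :
      Prf Ax ((Form.dk B hB (φ.imp ψ)).imp ((Form.dk B hB φ).imp (Form.dk B hB ψ)))
  | axB {φ : Form A AP} (B : Finset A) (hB : B.Nonempty) :
      Prf Ax (φ.imp (Form.dk B hB (Form.neg (Form.dk B hB φ.neg))))
  | ax4 {φ : Form A AP} (B : Finset A) (hB : B.Nonempty) :
      Prf Ax ((Form.dk B hB φ).imp (Form.dk B hB (Form.dk B hB φ)))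
  | axMono {φ : Form A AP} (B B' : Finset A) (hB : B.Nonempty) (hB' : B'.Nonempty)
      (hsub : B ⊆ B') : Prf Ax ((Form.dk B hB φ).imp (Form.dk B' hB' φ))
  | axUnion (B B' : Finset A) (hB : B.Nonempty) (hB' : B'.Nonempty) :
      Prf Ax (((Form.aliveGrp B hB).and (Form.aliveGrp B' hB')).imp
        (Form.aliveGrp (B ∪ B') (unionNE hB)))
  | axNE : Prf Ax (Form.bigOr ((Finset.univ : Finset A).toList.map Form.aliveAgent))
  | axP {φ : Form A AP} (B : Finset A) (hB : B.Nonempty) :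
      Prf Ax ((((Form.aliveGrp B hB).and (Form.deadGrp Bᶜ)).and φ).imp
        (Form.dk B hB ((Form.deadGrp Bᶜ).imp φ)))
  | extra {φ : Form A AP} : Ax φ → Prf Ax φ

/-- Provability in `SC` itself (no extra axioms). -/
def SC : Form A AP → Prop := Prf (fun _ => False)

/-- Instances of Axiom `Min : alive_B ∧ dead_{A∖B} ⇒ D_B dead_{A∖B}` for `B ⊊ A`. -/
def MinAx : Form A AP → Prop := fun φ =>
  ∃ (B : Finset A) (hB : B.Nonempty), B ≠ Finset.univ ∧
    φ = ((Form.aliveGrp B hB).and (Form.deadGrp Bᶜ)).imp (Form.dk B hB (Form.deadGrp Bᶜ))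

/-- Instances of Axiom `Max : alive_B ⇒ ¬ D_B ¬ dead_{A∖B}` for `B ⊊ A`. -/
def MaxAx : Form A AP → Prop := fun φ =>
  ∃ (B : Finset A) (hB : B.Nonempty), B ≠ Finset.univ ∧
    φ = (Form.aliveGrp B hB).imp (Form.neg (Form.dk B hB (Form.neg (Form.deadGrp Bᶜ))))

/-- Provability in `SCmin = SC + Min`. -/
def SCmin : Form A AP → Prop := Prf MinAx

/-- Provability in `SCmax = SC + Max`. -/
def SCmax : Form A AP → Prop := Prf MaxAx

/-- `Γ ⊢_P φ` : some finite conjunction of members of `Γ` provably implies `φ`. -/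
def ProvesFrom (P : Form A AP → Prop) (Γ : Set (Form A AP)) (φ : Form A AP) : Prop :=
  ∃ L : List (Form A AP), (∀ γ ∈ L, γ ∈ Γ) ∧ P ((Form.bigAnd L).imp φ)

/-- Consistency of a set of formulas with respect to a provability predicate `P`. -/
def ConsistentSet (P : Form A AP → Prop) (Γ : Set (Form A AP)) : Prop :=
  ¬ ProvesFrom P Γ Form.falsum

/-- Maximal consistent sets of formulas. -/
def MaxConsistent (P : Form A AP → Prop) (Γ : Set (Form A AP)) : Prop :=
  ConsistentSet P Γ ∧ ∀ φ ∉ Γ, ¬ ConsistentSet P (insert φ Γ)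

end ProofSystem

/-! ### Simplicial models -/

/-- The data of a (generalized) simplicial model: a set `S` of simplexes over the vertex
type `V`, a colouring `chi`, a set of worlds `Wld` and a labelling of worlds. -/
structure SimpData (A AP V : Type) where
  S : Set (Finset V)
  chi : V → A
  Wld : Set (Finset V)
  label : Finset V → Set AP

namespace SimpData

variable {A AP V : Type}

/-- A facet: a simplex maximal under inclusion. -/
def IsFacet (C : SimpData A AP V) (X : Finset V) : Prop :=
  X ∈ C.S ∧ ∀ Y ∈ C.S, X ⊆ Y → X = Y

/-- `⟨V,S,chi⟩` is a chromatic simplicial complex: simplexes are nonempty, every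
singleton is a simplex, `S` is downward closed, and every simplex has pairwise
distinct colours. -/
def IsComplex (C : SimpData A AP V) : Prop :=
  (∀ X ∈ C.S, X.Nonempty) ∧
  (∀ v : V, ({v} : Finset V) ∈ C.S) ∧
  (∀ X ∈ C.S, ∀ Y : Finset V, Y ⊆ X → Y.Nonempty → Y ∈ C.S) ∧
  (∀ X ∈ C.S, ∀ v ∈ X, ∀ w ∈ X, C.chi v = C.chi w → v = w)

/-- `C` is a generalized simplicial model: a chromatic simplicial complex together
with a set of worlds `Wld` with `Facets(C) ⊆ Wld ⊆ S`. -/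
def IsModel (C : SimpData A AP V) : Prop :=
  C.IsComplex ∧ (∀ X, C.IsFacet X → X ∈ C.Wld) ∧ C.Wld ⊆ C.S

/-- The model is minimal: the worlds are exactly the facets. -/
def Minimal (C : SimpData A AP V) : Prop := ∀ X, X ∈ C.Wld ↔ C.IsFacet X

/-- The model is maximal: every simplex is a world. -/
def Maximal (C : SimpData A AP V) : Prop := C.Wld = C.S

end SimpData

/-- Satisfaction on simplicial models: `C,w ⊨ D_B φ` iff `φ` holds at every world `w'`
with `B ⊆ chi(w ∩ w')`. -/
def SimpData.sat {A AP V : Type} (C : SimpData A AP V) : Finset V → Form A AP → Prop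
  | w, .atom p => p ∈ C.label w
  | w, .neg φ => ¬ C.sat w φ
  | w, .and φ ψ => C.sat w φ ∧ C.sat w ψ
  | w, .dk B _ φ => ∀ w' ∈ C.Wld, (↑B : Set A) ⊆ C.chi '' ((↑w : Set V) ∩ ↑w') → C.sat w' φ

/-! ### Partial epistemic models -/

/-- The data of a partial epistemic model: an accessibility relation for each agent and
a labelling of worlds. -/
structure PEData (A AP W : Type) where
  rel : A → W → W → Prop
  label : W → Set AP

namespace PEData

variable {A AP W : Type}

/-- Each relation is a partial equivalence relation (symmetric and transitive). -/
def IsPE (M : PEData A AP W) : Prop := ∀ a : A, Symmetric (M.rel a) ∧ Transitive (M.rel a)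

/-- The set of agents alive in a world. -/
def live (M : PEData A AP W) (w : W) : Set A := {a | M.rel a w w}

/-- Every world has at least one alive agent. -/
def NoEmptyWorld (M : PEData A AP W) : Prop := ∀ w : W, (M.live w).Nonempty

/-- Distinct worlds with the same alive agents are distinguished by some alive agent. -/
def Proper (M : PEData A AP W) : Prop :=
  ∀ w w' : W, w ≠ w' → M.live w = M.live w' → ∃ a ∈ M.live w, ¬ M.rel a w w'

/-- The model has no sub-world. -/
def Minimal (M : PEData A AP W) : Prop :=
  ∀ w w' : W, M.live w ⊂ M.live w' → ∃ a ∈ M.live w, ¬ M.rel a w w'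

/-- The model has all sub-worlds. -/
def Maximal (M : PEData A AP W) : Prop :=
  ∀ w' : W, ∀ B : Set A, B.Nonempty → B ⊂ M.live w' →
    ∃ w : W, M.live w = B ∧ ∀ a ∈ B, M.rel a w w'

end PEData

/-- Satisfaction on partial epistemic models: `M,w ⊨ D_B φ` iff `φ` holds at every `w'`
with `w ∼_a w'` for all `a ∈ B`. -/
def PEData.sat {A AP W : Type} (M : PEData A AP W) : W → Form A AP → Prop
  | w, .atom p => p ∈ M.label w
  | w, .neg φ => ¬ M.sat w φ
  | w, .and φ ψ => M.sat w φ ∧ M.sat w ψ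
  | w, .dk B _ φ => ∀ w' : W, (∀ a ∈ B, M.rel a w w') → M.sat w' φ

/-- The partial epistemic model `κ(C)` associated with a simplicial model `C`:
same worlds, `w ∼_a w'` iff `a ∈ chi(w ∩ w')`, same labelling. -/
def kappa {A AP V : Type} (C : SimpData A AP V) : PEData A AP {w : Finset V // w ∈ C.Wld} where
  rel := fun a w w' => a ∈ C.chi '' ((↑w.1 : Set V) ∩ ↑w'.1)
  label := fun w => C.label w.1

/-- Vertices of `σ(M)`: pairs `v^w_a = (a, [w]_a)` with `a` alive in `w`. -/
def sigmaVert {A AP W : Type} (M : PEData A AP W) : Type :=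
  {v : A × Set W // ∃ w : W, M.rel v.1 w w ∧ v.2 = {w' | M.rel v.1 w w'}}

/-- The world `X_w = { v^w_a | a ∈ live(w) }` of `σ(M)`. -/
def sigmaWorld {A AP W : Type} [Fintype A] (M : PEData A AP W) (w : W) :
    Finset (sigmaVert M) :=
  ((Finset.univ : Finset A).filter (fun a => M.rel a w w)).attach.image
    (fun a => ⟨(a.1, {w' | M.rel a.1 w w'}),
      ⟨w, by exact (Finset.mem_filter.mp a.2).2, rfl⟩⟩)

/-- The simplicial model `σ(M)` associated with a partial epistemic model `M`:
simplexes are the nonempty subsets of the sets `X_w`, worlds are the `X_w`,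
colouring is the first projection, and `ℓ(X_w) = L(w)`. -/
def sigmaModel {A AP W : Type} [Fintype A] (M : PEData A AP W) :
    SimpData A AP (sigmaVert M) where
  S := {X | X.Nonempty ∧ ∃ w : W, X ⊆ sigmaWorld M w}
  chi := fun v => v.1.1
  Wld := {X | ∃ w : W, X = sigmaWorld M w}
  label := fun X => {p | ∃ w : W, X = sigmaWorld M w ∧ p ∈ M.label w}

/-! ### Pseudo-models, the canonical model and unravelling -/

/-- The data of a pseudo-model: a relation `∼_B` for every group `B ⊆ A`. -/
structure PseudoData (A AP W : Type) where
  rel : Finset A → W → W → Prop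
  label : W → Set AP

/-- `M` is a pseudo-model: each `∼_B` is symmetric and transitive, the relations are
antitone (`∼_{B'} ⊆ ∼_B` for `B ⊆ B'`), and `w ∼_B w` together with `w ∼_{B'} w`
implies `w ∼_{B ∪ B'} w`. -/
def PseudoData.IsPseudo {A AP W : Type} [DecidableEq A] (M : PseudoData A AP W) : Prop :=
  (∀ B : Finset A, Symmetric (M.rel B)) ∧
  (∀ B : Finset A, Transitive (M.rel B)) ∧
  (∀ B B' : Finset A, B ⊆ B' → ∀ w w' : W, M.rel B' w w' → M.rel B w w') ∧
  (∀ (w : W) (B B' : Finset A), M.rel B w w → M.rel B' w w → M.rel (B ∪ B') w w)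

/-- Satisfaction on pseudo-models: `D_B φ` quantifies over `∼_B`-successors. -/
def PseudoData.sat {A AP W : Type} (M : PseudoData A AP W) : W → Form A AP → Prop
  | w, .atom p => p ∈ M.label w
  | w, .neg φ => ¬ M.sat w φ
  | w, .and φ ψ => M.sat w φ ∧ M.sat w ψ
  | w, .dk B _ φ => ∀ w' : W, M.rel B w w' → M.sat w' φ

/-- The canonical pseudo-model of a proof system `P`: worlds are the maximal
`P`-consistent sets, `Γ ∼_B Δ` iff every `φ` with `D_B φ ∈ Γ` satisfies `φ ∈ Δ`,
and `L(Γ) = Γ ∩ AP`. -/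
def canonicalPsm (A AP : Type) [Fintype A] [Nonempty AP] (P : Form A AP → Prop) :
    PseudoData A AP {Γ : Set (Form A AP) // MaxConsistent P Γ} where
  rel := fun B Γ Δ => ∀ (hB : B.Nonempty) (φ : Form A AP), Form.dk B hB φ ∈ Γ.1 → φ ∈ Δ.1
  label := fun Γ => {p | Form.atom p ∈ Γ.1}

/-- `IsHist M w l` : the sequence starting at `w` with steps `l` is a history of `M`. -/
def IsHist {A AP W : Type} (M : PseudoData A AP W) : W → List (Finset A × W) → Prop
  | _, [] => True
  | w, (B, w') :: t => M.rel B w w' ∧ IsHist M w' t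

/-- A history `(w₀, B₁, w₁, …, B_k, w_k)` of a pseudo-model `M`. -/
structure Hist {A AP W : Type} (M : PseudoData A AP W) where
  first : W
  steps : List (Finset A × W)
  valid : IsHist M first steps

/-- The last world of a history. -/
def Hist.last {A AP W : Type} {M : PseudoData A AP W} (h : Hist M) : W :=
  (h.steps.map Prod.snd).getLastD h.first

/-- `h →_a h'` : `h'` extends `h` by one step `(B, w)` with `a ∈ B`. -/
def histStep {A AP W : Type} (M : PseudoData A AP W) (a : A) (h h' : Hist M) : Prop :=
  ∃ (B : Finset A) (w : W), a ∈ B ∧ h'.first = h.first ∧ h'.steps = h.steps ++ [(B, w)]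

/-- `∼^U_a` : the symmetric-transitive closure of `→_a`. -/
def histRel {A AP W : Type} (M : PseudoData A AP W) (a : A) : Hist M → Hist M → Prop :=
  Relation.TransGen (fun h h' => histStep M a h h' ∨ histStep M a h' h)

/-- The unravelling `U(M)` of a pseudo-model `M`: worlds are histories, relations are
the `∼^U_a`, and `L^U(h) = L(last h)`. -/
def unravel {A AP W : Type} (M : PseudoData A AP W) : PEData A AP (Hist M) where
  rel := histRel M
  label := fun h => M.label h.last

/-- World-equivalence `w ≡ w'` : same alive agents and related by every alive agent. -/
def pequiv {A AP W : Type} (M : PEData A AP W) (w w' : W) : Prop :=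
  M.live w = M.live w' ∧ ∀ a ∈ M.live w, M.rel a w w'

/-- The quotient of a partial epistemic model by world-equivalence. -/
def properify {A AP W : Type} (M : PEData A AP W) : PEData A AP (Quot (pequiv M)) where
  rel := fun a x y => ∃ w w' : W, x = Quot.mk _ w ∧ y = Quot.mk _ w' ∧ M.rel a w w'
  label := fun x => {p | ∃ w : W, x = Quot.mk _ w ∧ p ∈ M.label w}

/-! ### Local simplicial models, morphisms and the guarded positive fragment -/

/-- The data of a local simplicial model: atomic propositions label the vertices. -/
structure LocalSimpData (A AP V : Type) where
  S : Set (Finset V)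
  chi : V → A
  Wld : Set (Finset V)
  vlabel : V → Set AP

namespace LocalSimpData

variable {A AP V : Type}

/-- A facet: a simplex maximal under inclusion. -/
def IsFacet (C : LocalSimpData A AP V) (X : Finset V) : Prop :=
  X ∈ C.S ∧ ∀ Y ∈ C.S, X ⊆ Y → X = Y

/-- `C` is a local simplicial model with respect to the ownership map `owner : AP → A`:
a chromatic simplicial complex with `Facets ⊆ Wld ⊆ S`, where each vertex is labelled
with atomic propositions belonging to its colour. -/
def IsModel (C : LocalSimpData A AP V) (owner : AP → A) : Prop :=
  (∀ X ∈ C.S, X.Nonempty) ∧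
  (∀ v : V, ({v} : Finset V) ∈ C.S) ∧
  (∀ X ∈ C.S, ∀ Y : Finset V, Y ⊆ X → Y.Nonempty → Y ∈ C.S) ∧
  (∀ X ∈ C.S, ∀ v ∈ X, ∀ w ∈ X, C.chi v = C.chi w → v = w) ∧
  (∀ X, C.IsFacet X → X ∈ C.Wld) ∧ C.Wld ⊆ C.S ∧
  (∀ v : V, ∀ p ∈ C.vlabel v, owner p = C.chi v)

/-- The labelling of a world: the union of the labellings of its vertices. -/
def wlabel (C : LocalSimpData A AP V) (X : Finset V) : Set AP :=
  ⋃ v ∈ X, C.vlabel v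

end LocalSimpData

/-- Purely propositional formulas. -/
inductive PForm (AP : Type) : Type
  | atom : AP → PForm AP
  | neg : PForm AP → PForm AP
  | and : PForm AP → PForm AP → PForm AP

/-- The atomic propositions occurring in a propositional formula. -/
def PForm.atoms {AP : Type} : PForm AP → Set AP
  | .atom p => {p}
  | .neg ψ => ψ.atoms
  | .and ψ χ => ψ.atoms ∪ χ.atoms

/-- Satisfaction of propositional formulas at a world of a local simplicial model. -/
def PForm.psat {A AP V : Type} (C : LocalSimpData A AP V) (w : Finset V) : PForm AP → Prop
  | .atom p => p ∈ C.wlabel w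
  | .neg ψ => ¬ PForm.psat C w ψ
  | .and ψ χ => PForm.psat C w ψ ∧ PForm.psat C w χ

/-- The guarded positive epistemic fragment:
`φ ::= (alive_B ⇒ ψ_B) | φ∧φ | φ∨φ | D_U φ | C_U φ`. -/
inductive GForm (A AP : Type) : Type
  | guard : Finset A → PForm AP → GForm A AP
  | and : GForm A AP → GForm A AP → GForm A AP
  | or : GForm A AP → GForm A AP → GForm A AP
  | dk : Finset A → GForm A AP → GForm A AP
  | ck : Finset A → GForm A AP → GForm A AP

/-- Well-formedness of guarded formulas: in a guard `alive_B ⇒ ψ_B`, all atomic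
propositions of `ψ_B` belong to agents of `B`. -/
def GForm.WF {A AP : Type} (owner : AP → A) : GForm A AP → Prop
  | .guard B ψ => ∀ p ∈ ψ.atoms, owner p ∈ B
  | .and φ₁ φ₂ => φ₁.WF owner ∧ φ₂.WF owner
  | .or φ₁ φ₂ => φ₁.WF owner ∧ φ₂.WF owner
  | .dk _ φ => φ.WF owner
  | .ck _ φ => φ.WF owner

/-- Reachability through a sequence of worlds, consecutive ones sharing a
`U`-coloured simplex. -/
def creach {A AP V : Type} (C : LocalSimpData A AP V) (U : Finset A) :
    Finset V → Finset V → Prop :=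
  Relation.ReflTransGen
    (fun X Y => Y ∈ C.Wld ∧ (↑U : Set A) ⊆ C.chi '' ((↑X : Set V) ∩ ↑Y))

/-- Satisfaction of guarded positive formulas on local simplicial models. -/
def GForm.gsat {A AP V : Type} (C : LocalSimpData A AP V) :
    Finset V → GForm A AP → Prop
  | w, .guard B ψ => ((↑B : Set A) ⊆ C.chi '' (↑w : Set V)) → ψ.psat C w
  | w, .and φ₁ φ₂ => φ₁.gsat C w ∧ φ₂.gsat C w
  | w, .or φ₁ φ₂ => φ₁.gsat C w ∨ φ₂.gsat C w
  | w, .dk U φ => ∀ w' ∈ C.Wld, (↑U : Set A) ⊆ C.chi '' ((↑w : Set V) ∩ ↑w') → φ.gsat C w'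
  | w, .ck U φ => ∀ w' ∈ C.Wld, creach C U w w' → φ.gsat C w'

/-- Image of a simplex under a vertex map. -/
def fimage {V V' : Type} (f : V → V') (X : Finset V) : Finset V' :=
  X.image f

/-- Morphisms of local simplicial models: map simplexes to simplexes and worlds to
worlds, preserving colours and vertex labellings. -/
def IsMorphism {A AP V V' : Type} (C : LocalSimpData A AP V) (D : LocalSimpData A AP V')
    (f : V → V') : Prop :=
  (∀ X ∈ C.S, fimage f X ∈ D.S) ∧
  (∀ X ∈ C.Wld, fimage f X ∈ D.Wld) ∧
  (∀ v : V, D.chi (f v) = C.chi v) ∧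
  (∀ v : V, D.vlabel (f v) = C.vlabel v)

end
section Aux

attribute [local instance] Classical.propDecidable

variable {A AP : Type} [Fintype A] [Nonempty AP]

namespace Aux

theorem vImp (v : Form A AP → Prop)
    (hn : ∀ ψ : Form A AP, v ψ.neg ↔ ¬ v ψ)
    (ha : ∀ ψ χ : Form A AP, v (ψ.and χ) ↔ (v ψ ∧ v χ)) (φ ψ : Form A AP) :
    v (φ.imp ψ) ↔ (v φ → v ψ) := by
  simp only [Form.imp, Form.or, hn, ha]; tauto

theorem vOr (v : Form A AP → Prop)
    (hn : ∀ ψ : Form A AP, v ψ.neg ↔ ¬ v ψ)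
    (ha : ∀ ψ χ : Form A AP, v (ψ.and χ) ↔ (v ψ ∧ v χ)) (φ ψ : Form A AP) :
    v (φ.or ψ) ↔ (v φ ∨ v ψ) := by
  simp only [Form.or, hn, ha]; tauto

theorem vVerum (v : Form A AP → Prop)
    (hn : ∀ ψ : Form A AP, v ψ.neg ↔ ¬ v ψ)
    (ha : ∀ ψ χ : Form A AP, v (ψ.and χ) ↔ (v ψ ∧ v χ)) :
    v (Form.verum : Form A AP) := by
  rw [Form.verum, vOr v hn ha, hn]; tauto

theorem vFalsum (v : Form A AP → Prop)
    (hn : ∀ ψ : Form A AP, v ψ.neg ↔ ¬ v ψ)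
    (ha : ∀ ψ χ : Form A AP, v (ψ.and χ) ↔ (v ψ ∧ v χ)) :
    ¬ v (Form.falsum : Form A AP) := by
  rw [Form.falsum, hn]; exact fun h => h (vVerum v hn ha)

theorem vBigAnd (v : Form A AP → Prop)
    (hn : ∀ ψ : Form A AP, v ψ.neg ↔ ¬ v ψ)
    (ha : ∀ ψ χ : Form A AP, v (ψ.and χ) ↔ (v ψ ∧ v χ)) (L : List (Form A AP)) :
    v (Form.bigAnd L) ↔ ∀ γ ∈ L, v γ := by
  induction L with
  | nil => simp [Form.bigAnd, vVerum v hn ha]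
  | cons φ t ih => simp [Form.bigAnd, ha, ih]

theorem vBigOr (v : Form A AP → Prop)
    (hn : ∀ ψ : Form A AP, v ψ.neg ↔ ¬ v ψ)
    (ha : ∀ ψ χ : Form A AP, v (ψ.and χ) ↔ (v ψ ∧ v χ)) (L : List (Form A AP)) :
    v (Form.bigOr L) ↔ ∃ γ ∈ L, v γ := by
  induction L with
  | nil => simp [Form.bigOr, vFalsum v hn ha]
  | cons φ t ih => simp [Form.bigOr, vOr v hn ha, ih]

variable {Ax : Form A AP → Prop}

theorem tc1 {α β : Form A AP} (T : IsTaut (α.imp β)) (h : Prf Ax α) : Prf Ax β :=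
  Prf.mp (Prf.taut T) h

theorem tc2 {α β γ : Form A AP} (T : IsTaut (α.imp (β.imp γ)))
    (h1 : Prf Ax α) (h2 : Prf Ax β) : Prf Ax γ :=
  Prf.mp (Prf.mp (Prf.taut T) h1) h2

/-- K in mp-able form. -/
theorem dk_mp {φ ψ : Form A AP} (B : Finset A) (hB : B.Nonempty)
    (h1 : Prf Ax (Form.dk B hB (φ.imp ψ))) (h2 : Prf Ax (Form.dk B hB φ)) :
    Prf Ax (Form.dk B hB ψ) :=
  Prf.mp (Prf.mp (Prf.axK B hB) h1) h2

end Aux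

end Aux
section Aux2

attribute [local instance] Classical.propDecidable
set_option linter.unusedSectionVars false

variable {A AP : Type} [Fintype A] [Nonempty AP] {Ax : Form A AP → Prop}

namespace Aux

theorem consistent_mono {Γ Δ : Set (Form A AP)} (h : Γ ⊆ Δ)
    (hΔ : ConsistentSet (Prf Ax) Δ) : ConsistentSet (Prf Ax) Γ := by
  intro ⟨L, hL, hP⟩; exact hΔ ⟨L, fun γ hγ => h (hL γ hγ), hP⟩

theorem mem_of_proves {Γ : Set (Form A AP)} (hΓ : MaxConsistent (Prf Ax) Γ)
    {φ : Form A AP} (h : ProvesFrom (Prf Ax) Γ φ) : φ ∈ Γ := by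
  by_contra hφ
  obtain ⟨L, hL, hP⟩ := h
  have h2 := hΓ.2 φ hφ
  rw [ConsistentSet, not_not] at h2
  obtain ⟨L2, hL2, hP2⟩ := h2
  refine hΓ.1 ⟨L ++ L2.filter (· ≠ φ), ?_, ?_⟩
  · intro γ hγ
    rcases List.mem_append.mp hγ with h | h
    · exact hL γ h
    · have hm := List.mem_filter.mp h
      rcases hL2 γ hm.1 with h' | h'
      · exact absurd h' (by simpa using hm.2)
      · exact h'
  · refine Aux.tc2 ?_ hP hP2
    intro v hn ha
    simp only [Aux.vImp v hn ha, Aux.vBigAnd v hn ha]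
    intro h1 h2 h3
    refine absurd (h2 ?_) (Aux.vFalsum v hn ha)
    intro γ hγ
    by_cases he : γ = φ
    · subst he
      exact h1 (fun δ hδ => h3 δ (List.mem_append.mpr (Or.inl hδ)))
    · exact h3 γ (List.mem_append.mpr (Or.inr (List.mem_filter.mpr ⟨hγ, by simpa using he⟩)))

theorem thm_mem {Γ : Set (Form A AP)} (hΓ : MaxConsistent (Prf Ax) Γ)
    {φ : Form A AP} (h : Prf Ax φ) : φ ∈ Γ := by
  refine mem_of_proves hΓ ⟨[], by simp, Aux.tc1 ?_ h⟩
  intro v hn ha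
  simp only [Aux.vImp v hn ha]
  exact fun h _ => h

theorem mcs_mp {Γ : Set (Form A AP)} (hΓ : MaxConsistent (Prf Ax) Γ)
    {φ ψ : Form A AP} (h1 : φ.imp ψ ∈ Γ) (h2 : φ ∈ Γ) : ψ ∈ Γ := by
  refine mem_of_proves hΓ ⟨[φ.imp ψ, φ], by simp [h1, h2], Prf.taut ?_⟩
  intro v hn ha
  simp only [Aux.vImp v hn ha, Aux.vBigAnd v hn ha]
  intro h
  have hi := h (φ.imp ψ) (by simp)
  rw [Aux.vImp v hn ha] at hi
  exact hi (h φ (by simp))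

theorem mcs_neg {Γ : Set (Form A AP)} (hΓ : MaxConsistent (Prf Ax) Γ)
    (φ : Form A AP) : φ.neg ∈ Γ ↔ φ ∉ Γ := by
  constructor
  · intro h1 h2
    refine hΓ.1 ⟨[φ, φ.neg], by simp [h1, h2], Prf.taut ?_⟩
    intro v hn ha
    simp only [Aux.vImp v hn ha, Aux.vBigAnd v hn ha]
    intro h
    have := h φ.neg (by simp); rw [hn] at this
    exact absurd (h φ (by simp)) this
  · intro h1
    by_contra h2
    have c1 := hΓ.2 φ h1
    have c2 := hΓ.2 φ.neg h2
    rw [ConsistentSet, not_not] at c1 c2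
    obtain ⟨L1, hL1, hP1⟩ := c1
    obtain ⟨L2, hL2, hP2⟩ := c2
    refine hΓ.1 ⟨L1.filter (· ≠ φ) ++ L2.filter (· ≠ φ.neg), ?_, ?_⟩
    · intro γ hγ
      rcases List.mem_append.mp hγ with h | h
      · have hm := List.mem_filter.mp h
        rcases hL1 γ hm.1 with h' | h'
        · exact absurd h' (by simpa using hm.2)
        · exact h'
      · have hm := List.mem_filter.mp h
        rcases hL2 γ hm.1 with h' | h'
        · exact absurd h' (by simpa using hm.2)
        · exact h'
    · refine Aux.tc2 ?_ hP1 hP2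
      intro v hn ha
      simp only [Aux.vImp v hn ha, Aux.vBigAnd v hn ha]
      intro h1 h2 h3
      by_cases hv : v φ
      · refine absurd (h1 ?_) (Aux.vFalsum v hn ha)
        intro γ hγ
        by_cases he : γ = φ
        · subst he; exact hv
        · exact h3 γ (List.mem_append.mpr (Or.inl (List.mem_filter.mpr ⟨hγ, by simpa using he⟩)))
      · refine absurd (h2 ?_) (Aux.vFalsum v hn ha)
        intro γ hγ
        by_cases he : γ = φ.neg
        · subst he; rw [hn]; exact hv
        · exact h3 γ (List.mem_append.mpr (Or.inr (List.mem_filter.mpr ⟨hγ, by simpa using he⟩)))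

theorem mcs_and {Γ : Set (Form A AP)} (hΓ : MaxConsistent (Prf Ax) Γ)
    (φ ψ : Form A AP) : φ.and ψ ∈ Γ ↔ (φ ∈ Γ ∧ ψ ∈ Γ) := by
  constructor
  · intro h
    constructor <;>
    · refine mem_of_proves hΓ ⟨[φ.and ψ], by simp [h], Prf.taut ?_⟩
      intro v hn ha
      simp only [Aux.vImp v hn ha, Aux.vBigAnd v hn ha]
      intro hh
      have := hh (φ.and ψ) (by simp)
      rw [ha] at this
      first | exact this.1 | exact this.2
  · intro ⟨h1, h2⟩
    refine mem_of_proves hΓ ⟨[φ, ψ], by simp [h1, h2], Prf.taut ?_⟩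
    intro v hn ha
    simp only [Aux.vImp v hn ha, Aux.vBigAnd v hn ha, ha]
    intro hh
    exact ⟨hh φ (by simp), hh ψ (by simp)⟩

theorem mcs_bigAnd {Γ : Set (Form A AP)} (hΓ : MaxConsistent (Prf Ax) Γ)
    (L : List (Form A AP)) : Form.bigAnd L ∈ Γ ↔ ∀ γ ∈ L, γ ∈ Γ := by
  induction L with
  | nil =>
    simp only [Form.bigAnd, List.not_mem_nil, false_implies, implies_true, iff_true]
    refine thm_mem hΓ (Prf.taut ?_)
    intro v hn ha; exact Aux.vVerum v hn ha
  | cons φ t ih =>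
    rw [Form.bigAnd, mcs_and hΓ, ih]
    simp

theorem mcs_bigOr {Γ : Set (Form A AP)} (hΓ : MaxConsistent (Prf Ax) Γ)
    {L : List (Form A AP)} (h : Form.bigOr L ∈ Γ) : ∃ γ ∈ L, γ ∈ Γ := by
  induction L with
  | nil =>
    exfalso
    refine hΓ.1 ⟨[Form.bigOr []], by simp [h], Prf.taut ?_⟩
    intro v hn ha
    simp only [Aux.vImp v hn ha, Aux.vBigAnd v hn ha]
    intro hh
    have hv : v (Form.bigOr ([] : List (Form A AP))) := hh _ (by simp)
    exact hv
  | cons φ t ih =>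
    by_cases hφ : φ ∈ Γ
    · exact ⟨φ, by simp, hφ⟩
    · have hneg : φ.neg ∈ Γ := (mcs_neg hΓ φ).mpr hφ
      have ht : Form.bigOr t ∈ Γ := by
        refine mem_of_proves hΓ ⟨[Form.bigOr (φ :: t), φ.neg], by simp [h, hneg], Prf.taut ?_⟩
        intro v hn ha
        simp only [Aux.vImp v hn ha, Aux.vBigAnd v hn ha]
        intro hh
        have h1 := hh _ (show Form.bigOr (φ :: t) ∈ _ by simp)
        have h2 := hh φ.neg (by simp)
        rw [hn] at h2
        rw [show Form.bigOr (φ :: t) = φ.or (Form.bigOr t) from rfl, Aux.vOr v hn ha] at h1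
        tauto
      obtain ⟨γ, hγ, hγΓ⟩ := ih ht
      exact ⟨γ, by simp [hγ], hγΓ⟩

theorem lindenbaum {Γ : Set (Form A AP)} (h : ConsistentSet (Prf Ax) Γ) :
    ∃ Δ, Γ ⊆ Δ ∧ MaxConsistent (Prf Ax) Δ := by
  have H : ∀ c ⊆ {Δ : Set (Form A AP) | ConsistentSet (Prf Ax) Δ},
      IsChain (· ⊆ ·) c → c.Nonempty →
      ∃ ub ∈ {Δ : Set (Form A AP) | ConsistentSet (Prf Ax) Δ}, ∀ s ∈ c, s ⊆ ub := by
    intro c hc hchain hne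
    refine ⟨⋃₀ c, ?_, fun s hs => Set.subset_sUnion_of_mem hs⟩
    intro ⟨L, hL, hP⟩
    have : ∃ s ∈ c, ∀ γ ∈ L, γ ∈ s := by
      clear hP
      induction L with
      | nil => exact ⟨hne.choose, hne.choose_spec, by simp⟩
      | cons γ t ih =>
        obtain ⟨s, hs, hst⟩ := ih (fun δ hδ => hL δ (by simp [hδ]))
        obtain ⟨s', hs', hγ⟩ := hL γ (by simp)
        rcases hchain.total hs hs' with hss | hss
        · exact ⟨s', hs', fun δ hδ => by
            rcases List.mem_cons.mp hδ with h | h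
            · exact h ▸ hγ
            · exact hss (hst δ h)⟩
        · exact ⟨s, hs, fun δ hδ => by
            rcases List.mem_cons.mp hδ with h | h
            · exact h ▸ hss hγ
            · exact hst δ h⟩
    obtain ⟨s, hs, hss⟩ := this
    exact hc hs ⟨L, hss, hP⟩
  obtain ⟨Δ, hsub, hmem, hmax⟩ :=
    zorn_subset_nonempty {Δ | ConsistentSet (Prf Ax) Δ} H Γ h
  refine ⟨Δ, hsub, hmem, ?_⟩
  intro φ hφ hcon
  have h2 := hmax hcon (Set.subset_insert φ Δ)
  exact hφ (h2 (Set.mem_insert φ Δ))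

end Aux

end Aux2
section Aux3

attribute [local instance] Classical.propDecidable
set_option linter.unusedSectionVars false

variable {A AP : Type} [Fintype A] [Nonempty AP] {Ax : Form A AP → Prop}

namespace Aux

theorem falsum_not_mem {Γ : Set (Form A AP)} (hΓ : MaxConsistent (Prf Ax) Γ) :
    Form.falsum ∉ Γ := by
  intro h
  refine hΓ.1 ⟨[Form.falsum], by simp [h], Prf.taut ?_⟩
  intro v hn ha
  simp only [Aux.vImp v hn ha, Aux.vBigAnd v hn ha]
  exact fun h => h _ (by simp)

/-- `⊢ D_B φ → D_B ψ` from `⊢ φ → ψ`. -/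
theorem dk_mono {φ ψ : Form A AP} (B : Finset A) (hB : B.Nonempty)
    (h : Prf Ax (φ.imp ψ)) (h2 : Prf Ax (Form.dk B hB φ)) : Prf Ax (Form.dk B hB ψ) :=
  dk_mp B hB (Prf.nec B hB h) h2

theorem mcs_dk_mono {Γ : Set (Form A AP)} (hΓ : MaxConsistent (Prf Ax) Γ)
    {φ ψ : Form A AP} (B : Finset A) (hB : B.Nonempty)
    (h : Prf Ax (φ.imp ψ)) (h2 : Form.dk B hB φ ∈ Γ) : Form.dk B hB ψ ∈ Γ :=
  mcs_mp hΓ (thm_mem hΓ (Prf.mp (Prf.axK B hB) (Prf.nec B hB h))) h2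

theorem mcs_dk_and {Γ : Set (Form A AP)} (hΓ : MaxConsistent (Prf Ax) Γ)
    {φ ψ : Form A AP} (B : Finset A) (hB : B.Nonempty)
    (h1 : Form.dk B hB φ ∈ Γ) (h2 : Form.dk B hB ψ ∈ Γ) :
    Form.dk B hB (φ.and ψ) ∈ Γ := by
  have T : IsTaut (φ.imp (ψ.imp (φ.and ψ))) := by
    intro v hn ha
    simp only [Aux.vImp v hn ha, ha]
    tauto
  have step : Form.dk B hB (ψ.imp (φ.and ψ)) ∈ Γ := mcs_dk_mono hΓ B hB (Prf.taut T) h1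
  exact mcs_mp hΓ (mcs_mp hΓ (thm_mem hΓ (Prf.axK B hB)) step) h2

theorem mcs_dk_bigAnd {Γ : Set (Form A AP)} (hΓ : MaxConsistent (Prf Ax) Γ)
    (B : Finset A) (hB : B.Nonempty) (L : List (Form A AP))
    (h : ∀ ψ ∈ L, Form.dk B hB ψ ∈ Γ) : Form.dk B hB (Form.bigAnd L) ∈ Γ := by
  induction L with
  | nil =>
    refine thm_mem hΓ (Prf.nec B hB (Prf.taut ?_))
    intro v hn ha
    exact Aux.vVerum v hn ha
  | cons ψ t ih =>
    exact mcs_dk_and hΓ B hB (h ψ (by simp)) (ih fun χ hχ => h χ (by simp [hχ]))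

/-- Veridicality at alive groups: `alive_B ∈ Γ → (D_B φ ∈ Γ → φ ∈ Γ)`. -/
theorem alive_verid {Γ : Set (Form A AP)} (hΓ : MaxConsistent (Prf Ax) Γ)
    {B : Finset A} {hB : B.Nonempty} (ha : Form.aliveGrp B hB ∈ Γ)
    {φ : Form A AP} (h : Form.dk B hB φ ∈ Γ) : φ ∈ Γ := by
  by_contra hφ
  have hneg : φ.neg ∈ Γ := (mcs_neg hΓ φ).mpr hφ
  have h1 : Form.dk B hB (Form.neg (Form.dk B hB φ.neg.neg)) ∈ Γ :=
    mcs_mp hΓ (thm_mem hΓ (Prf.axB B hB)) hneg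
  have h2 : Form.dk B hB (Form.dk B hB φ) ∈ Γ :=
    mcs_mp hΓ (thm_mem hΓ (Prf.ax4 B hB)) h
  have h3 : Form.dk B hB ((Form.dk B hB φ).and (Form.neg (Form.dk B hB φ.neg.neg))) ∈ Γ :=
    mcs_dk_and hΓ B hB h2 h1
  have hth : Prf Ax (((Form.dk B hB φ).and (Form.neg (Form.dk B hB φ.neg.neg))).imp
      Form.falsum) := by
    have hdd : Prf Ax ((Form.dk B hB φ).imp (Form.dk B hB φ.neg.neg)) := by
      refine Prf.mp (Prf.axK B hB) (Prf.nec B hB (Prf.taut ?_))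
      intro v hn ha'
      simp only [Aux.vImp v hn ha', hn]
      tauto
    refine Aux.tc1 ?_ hdd
    intro v hn ha'
    simp only [Aux.vImp v hn ha', ha', hn]
    intro h1 ⟨h2, h3⟩
    exact absurd (h1 h2) h3
  have h4 : Form.dk B hB Form.falsum ∈ Γ := mcs_dk_mono hΓ B hB hth h3
  exact absurd h4 ((mcs_neg hΓ _).mp ha)

theorem alive_iff_rel {Γ : {Γ : Set (Form A AP) // MaxConsistent (Prf Ax) Γ}}
    {B : Finset A} (hB : B.Nonempty) :
    Form.aliveGrp B hB ∈ Γ.1 ↔ (canonicalPsm A AP (Prf Ax)).rel B Γ Γ := by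
  constructor
  · intro ha hB' φ h
    exact alive_verid Γ.2 (by exact ha) h
  · intro hr
    rw [Form.aliveGrp, mcs_neg Γ.2]
    intro h
    exact falsum_not_mem Γ.2 (hr hB _ h)

theorem canonical_pseudo : (canonicalPsm A AP (Prf Ax)).IsPseudo := by
  refine ⟨?_, ?_, ?_, ?_⟩
  · -- symmetric
    intro B Γ Δ h hB φ hφ
    by_contra hc
    have hneg : φ.neg ∈ Γ.1 := (mcs_neg Γ.2 φ).mpr hc
    have h1 : Form.dk B hB (Form.neg (Form.dk B hB φ.neg.neg)) ∈ Γ.1 :=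
      mcs_mp Γ.2 (thm_mem Γ.2 (Prf.axB B hB)) hneg
    have h2 : Form.neg (Form.dk B hB φ.neg.neg) ∈ Δ.1 := h hB _ h1
    have h3 : Form.dk B hB φ.neg.neg ∈ Δ.1 := by
      refine mcs_dk_mono Δ.2 B hB (Prf.taut ?_) hφ
      intro v hn ha
      simp only [Aux.vImp v hn ha, hn]
      tauto
    exact absurd h3 ((mcs_neg Δ.2 _).mp h2)
  · -- transitive
    intro B Γ Δ Θ h1 h2 hB φ hφ
    exact h2 hB φ (h1 hB _ (mcs_mp Γ.2 (thm_mem Γ.2 (Prf.ax4 B hB)) hφ))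
  · -- antitone
    intro B B' hsub Γ Δ h hB φ hφ
    exact h (hB.mono hsub) φ (mcs_mp Γ.2 (thm_mem Γ.2 (Prf.axMono B B' hB (hB.mono hsub) hsub)) hφ)
  · -- diagonal union
    intro Γ B B' h1 h2
    by_cases hBe : B = ∅
    · subst hBe; rwa [Finset.empty_union]
    by_cases hB'e : B' = ∅
    · subst hB'e; rwa [Finset.union_empty]
    have hB : B.Nonempty := Finset.nonempty_of_ne_empty hBe
    have hB' : B'.Nonempty := Finset.nonempty_of_ne_empty hB'e
    have ha1 : Form.aliveGrp B hB ∈ Γ.1 := (alive_iff_rel hB).mpr h1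
    have ha2 : Form.aliveGrp B' hB' ∈ Γ.1 := (alive_iff_rel hB').mpr h2
    have hu : Form.aliveGrp (B ∪ B') (unionNE hB) ∈ Γ.1 :=
      mcs_mp Γ.2 (thm_mem Γ.2 (Prf.axUnion B B' hB hB'))
        ((mcs_and Γ.2 _ _).mpr ⟨ha1, ha2⟩)
    exact (alive_iff_rel (unionNE hB)).mp hu

theorem exists_succ {Γ : {Γ : Set (Form A AP) // MaxConsistent (Prf Ax) Γ}}
    {B : Finset A} {hB : B.Nonempty} {φ : Form A AP} (h : Form.dk B hB φ ∉ Γ.1) :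
    ∃ Δ : {Γ : Set (Form A AP) // MaxConsistent (Prf Ax) Γ},
      (canonicalPsm A AP (Prf Ax)).rel B Γ Δ ∧ φ ∉ Δ.1 := by
  set Δ₀ : Set (Form A AP) := {ψ | Form.dk B hB ψ ∈ Γ.1} ∪ {φ.neg} with hΔ₀
  have hcon : ConsistentSet (Prf Ax) Δ₀ := by
    intro ⟨L, hL, hP⟩
    set L' := L.filter (· ≠ φ.neg) with hL'
    have hL'mem : ∀ ψ ∈ L', Form.dk B hB ψ ∈ Γ.1 := by
      intro ψ hψ
      have hm := List.mem_filter.mp hψ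
      rcases hL ψ hm.1 with h' | h'
      · exact h'
      · exact absurd h' (by simpa using hm.2)
    have himp : Prf Ax ((Form.bigAnd L').imp φ) := by
      refine Aux.tc1 ?_ hP
      intro v hn ha
      simp only [Aux.vImp v hn ha, Aux.vBigAnd v hn ha]
      intro h1 h2
      by_contra hv
      refine Aux.vFalsum v hn ha (h1 ?_)
      intro γ hγ
      by_cases he : γ = φ.neg
      · subst he; rw [hn]; exact hv
      · exact h2 γ (List.mem_filter.mpr ⟨hγ, by simpa using he⟩)
    have hdkL : Form.dk B hB (Form.bigAnd L') ∈ Γ.1 := mcs_dk_bigAnd Γ.2 B hB L' hL'mem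
    have : Form.dk B hB φ ∈ Γ.1 := mcs_dk_mono Γ.2 B hB himp hdkL
    exact h this
  obtain ⟨Δ, hsub, hΔ⟩ := lindenbaum hcon
  refine ⟨⟨Δ, hΔ⟩, ?_, ?_⟩
  · intro hB' ψ hψ
    exact hsub (Or.inl hψ)
  · intro hφΔ
    exact absurd hφΔ ((mcs_neg hΔ φ).mp (hsub (Or.inr rfl)))

theorem canonical_truth : ∀ (φ : Form A AP)
    (Γ : {Γ : Set (Form A AP) // MaxConsistent (Prf Ax) Γ}),
    (canonicalPsm A AP (Prf Ax)).sat Γ φ ↔ φ ∈ Γ.1 := by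
  intro φ
  induction φ with
  | atom p => intro Γ; rfl
  | neg ψ ih =>
    intro Γ
    rw [PseudoData.sat, ih Γ, mcs_neg Γ.2]
  | and ψ χ ih1 ih2 =>
    intro Γ
    rw [PseudoData.sat, ih1 Γ, ih2 Γ, mcs_and Γ.2]
  | dk B hB ψ ih =>
    intro Γ
    constructor
    · intro hs
      by_contra hc
      obtain ⟨Δ, hrel, hψ⟩ := exists_succ hc
      exact hψ ((ih Δ).mp (hs Δ hrel))
    · intro hm Δ hrel
      exact (ih Δ).mpr (hrel hB ψ hm)

theorem canonical_NE (Γ : {Γ : Set (Form A AP) // MaxConsistent (Prf Ax) Γ}) :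
    ∃ a : A, Form.aliveAgent a ∈ Γ.1 := by
  have h := thm_mem Γ.2 (Prf.axNE (Ax := Ax))
  obtain ⟨γ, hγ, hγΓ⟩ := mcs_bigOr Γ.2 h
  obtain ⟨a, _, rfl⟩ := List.mem_map.mp hγ
  exact ⟨a, hγΓ⟩

end Aux

end Aux3
section Aux4

attribute [local instance] Classical.propDecidable
set_option linter.unusedSectionVars false

variable {A AP W : Type} [DecidableEq A] {M : PseudoData A AP W}

namespace Aux

theorem getLastD_append' {α : Type*} (xs ys : List α) (d : α) :
    (xs ++ ys).getLastD d = ys.getLastD (xs.getLastD d) := by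
  induction xs generalizing d with
  | nil => rfl
  | cons x xs ih => simp only [List.cons_append, List.getLastD_cons, ih]

theorem isHist_append {l₁ l₂ : List (Finset A × W)} {w : W} :
    IsHist M w (l₁ ++ l₂) ↔
      IsHist M w l₁ ∧ IsHist M ((l₁.map Prod.snd).getLastD w) l₂ := by
  induction l₁ generalizing w with
  | nil => simp [IsHist]
  | cons e t ih =>
    obtain ⟨B, u⟩ := e
    constructor
    · rintro ⟨h1, h2⟩
      have h2' : IsHist M u (t ++ l₂) := h2
      rw [ih] at h2'
      refine ⟨⟨h1, h2'.1⟩, ?_⟩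
      rw [List.map_cons, List.getLastD_cons]
      exact h2'.2
    · rintro ⟨⟨h1, h2⟩, h3⟩
      rw [List.map_cons, List.getLastD_cons] at h3
      exact ⟨h1, ih.mpr ⟨h2, h3⟩⟩

theorem hist_last_eq (h : Hist M) {c rest : List (Finset A × W)}
    (hs : h.steps = c ++ rest) :
    h.last = (rest.map Prod.snd).getLastD ((c.map Prod.snd).getLastD h.first) := by
  rw [Hist.last, hs, List.map_append, getLastD_append']

/-- chain of `B`-related steps. -/
theorem chain_rel (hM : M.IsPseudo) (B : Finset A) :
    ∀ (l : List (Finset A × W)) (w : W), l ≠ [] → IsHist M w l →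
      (∀ e ∈ l, B ⊆ e.1) → M.rel B w ((l.map Prod.snd).getLastD w) := by
  intro l
  induction l with
  | nil => intro w hne; exact absurd rfl hne
  | cons e t ih =>
    intro w _ hh hlab
    have h1 : M.rel B w e.2 := hM.2.2.1 B e.1 (hlab e (by simp)) w e.2 hh.1
    by_cases ht : t = []
    · subst ht; simpa using h1
    · have h2 := ih e.2 ht hh.2 (fun e' he' => hlab e' (by simp [he']))
      have h3 := hM.2.1 B h1 h2
      rw [List.map_cons, List.getLastD_cons]
      exact h3

theorem rel_singleton_fold (hM : M.IsPseudo) {B : Finset A} (hB : B.Nonempty) {x : W}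
    (h : ∀ a ∈ B, M.rel {a} x x) : M.rel B x x := by
  induction B using Finset.induction with
  | empty => exact absurd hB (by simp)
  | @insert a s ha ih =>
    by_cases hs : s = ∅
    · subst hs
      simpa using h a (by simp)
    · have h1 : M.rel {a} x x := h a (by simp)
      have h2 : M.rel s x x := ih (Finset.nonempty_of_ne_empty hs) (fun b hb => h b (by simp [hb]))
      have h3 := hM.2.2.2 x {a} s h1 h2
      rw [Finset.insert_eq]
      exact h3

theorem histRel_char (hM : M.IsPseudo) {a : A} {h h' : Hist M}
    (hr : histRel M a h h') :
    h'.first = h.first ∧ M.rel {a} h.last h.last ∧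
    ∃ c : List (Finset A × W), c <+: h.steps ∧ c <+: h'.steps ∧
      (∀ e ∈ h.steps.drop c.length, a ∈ e.1) ∧
      (∀ e ∈ h'.steps.drop c.length, a ∈ e.1) := by
  -- helper facts about single edges
  have edge_rel : ∀ g g' : Hist M, histStep M a g g' →
      M.rel {a} g.last g'.last ∧ g'.first = g.first ∧
      ∃ B w, a ∈ B ∧ g'.steps = g.steps ++ [(B, w)] := by
    intro g g' ⟨B, w, haB, hf, hs⟩
    have hv := g'.valid
    rw [hs, hf] at hv
    have hrel : M.rel B g.last w := by
      have := (isHist_append.mp hv).2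
      exact this.1
    have hlast : g'.last = w := by
      rw [hist_last_eq g' hs]
      rfl
    refine ⟨?_, hf, B, w, haB, hs⟩
    rw [hlast]
    exact hM.2.2.1 {a} B (Finset.singleton_subset_iff.mpr haB) _ _ hrel
  induction hr with
  | @single h2 hstep =>
    rcases hstep with hstep | hstep
    · obtain ⟨hrel, hf, B, w, haB, hs⟩ := edge_rel _ _ hstep
      refine ⟨hf, ?_, h.steps, List.prefix_rfl, ⟨[(B, w)], hs.symm⟩, by simp, ?_⟩
      · exact hM.2.1 {a} hrel (hM.1 {a} hrel)
      · intro e he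
        rw [hs, List.drop_left] at he
        simp at he
        simp [he, haB]
    · obtain ⟨hrel, hf, B, w, haB, hs⟩ := edge_rel _ _ hstep
      refine ⟨hf.symm, ?_, h2.steps, ⟨[(B, w)], hs.symm⟩, List.prefix_rfl, ?_, by simp⟩
      · exact hM.2.1 {a} (hM.1 {a} hrel) hrel
      · intro e he
        rw [hs, List.drop_left] at he
        simp at he
        simp [he, haB]
  | @tail g1 g2 hr2 hstep ih =>
    obtain ⟨hf, hrel, c, hc1, hc2, hd1, hd2⟩ := ih
    rcases hstep with hstep | hstep
    · -- g2 extends g1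
      obtain ⟨_, hf', B, w, haB, hs⟩ := edge_rel _ _ hstep
      refine ⟨hf'.trans hf, hrel, c, hc1, ?_, hd1, ?_⟩
      · exact hc2.trans ⟨[(B, w)], hs.symm⟩
      · intro e he
        rw [hs, List.drop_append_of_le_length hc2.length_le] at he
        rcases List.mem_append.mp he with he | he
        · exact hd2 e he
        · simp at he; simp [he, haB]
    · -- g1 extends g2
      obtain ⟨_, hf', B, w, haB, hs⟩ := edge_rel _ _ hstep
      by_cases hlen : c.length ≤ g2.steps.length
      · refine ⟨hf'.symm.trans hf, hrel, c, hc1, ?_, hd1, ?_⟩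
        · rw [List.prefix_iff_eq_take] at hc2 ⊢
          rw [hs, List.take_append_of_le_length hlen] at hc2
          exact hc2
        · intro e he
          refine hd2 e ?_
          rw [hs, List.drop_append_of_le_length hlen]
          exact List.mem_append.mpr (Or.inl he)
      · push_neg at hlen
        have hceq : c = g1.steps := by
          have l1 := hc2.length_le
          rw [hs] at l1
          simp at l1
          have hll : c.length = g1.steps.length := by
            rw [hs]; simp; omega
          exact List.IsPrefix.eq_of_length hc2 hll
        have hc'' : g2.steps <+: h.steps := by
          refine List.IsPrefix.trans ?_ hc1
          rw [hceq, hs]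
          exact ⟨[(B, w)], rfl⟩
        refine ⟨hf'.symm.trans hf, hrel, g2.steps, hc'', List.prefix_rfl, ?_, by simp⟩
        intro e he
        obtain ⟨rest, hrest⟩ := hc1
        have hsplit : h.steps.drop g2.steps.length = (B, w) :: rest := by
          rw [← hrest, hceq, hs, List.append_assoc, List.drop_left]
          rfl
        rw [hsplit] at he
        rcases List.mem_cons.mp he with he | he
        · simp [he, haB]
        · refine hd1 e ?_
          rw [← hrest, List.drop_left]
          exact he

end Aux

end Aux4
section Aux5

attribute [local instance] Classical.propDecidable
set_option linter.unusedSectionVars false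

variable {A AP W : Type} [DecidableEq A] {M : PseudoData A AP W}

namespace Aux

/-- Extend a history by one step. -/
def histExt (h : Hist M) (B : Finset A) (w : W) (hrel : M.rel B h.last w) : Hist M :=
  ⟨h.first, h.steps ++ [(B, w)], by
    rw [isHist_append]
    exact ⟨h.valid, hrel, trivial⟩⟩

theorem histExt_last (h : Hist M) (B : Finset A) (w : W) (hrel : M.rel B h.last w) :
    (histExt h B w hrel).last = w := by
  rw [Hist.last]
  show ((h.steps ++ [(B, w)]).map Prod.snd).getLastD h.first = w
  rw [List.map_append, getLastD_append']
  rfl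

theorem histExt_step {a : A} (h : Hist M) (B : Finset A) (w : W) (haB : a ∈ B)
    (hrel : M.rel B h.last w) : histStep M a h (histExt h B w hrel) :=
  ⟨B, w, haB, rfl, rfl⟩

theorem histRel_of_rel {a : A} {h : Hist M} {B : Finset A} {w : W} (haB : a ∈ B)
    (hrel : M.rel B h.last w) : histRel M a h (histExt h B w hrel) :=
  Relation.TransGen.single (Or.inl (histExt_step h B w haB hrel))

theorem rel_self_of_histRel (hM : M.IsPseudo) {a : A} {h h' : Hist M}
    (hr : histRel M a h h') : M.rel {a} h.last h.last :=
  (histRel_char hM hr).2.1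

/-- liveness gives reflexive loop in the unravelling. -/
theorem histRel_self (hM : M.IsPseudo) {a : A} {h : Hist M}
    (hrel : M.rel {a} h.last h.last) : histRel M a h h := by
  have h1 := histRel_of_rel (Finset.mem_singleton_self a) hrel
  exact Relation.TransGen.tail h1 (Or.inr (histExt_step h {a} h.last
    (Finset.mem_singleton_self a) hrel))

/-- The key lemma: mutual `a`-connectedness for all `a ∈ B` implies `B`-relatedness
of the endpoints. -/
theorem histRel_rel (hM : M.IsPseudo) {B : Finset A} (hB : B.Nonempty)
    {h h' : Hist M} (hr : ∀ a ∈ B, histRel M a h h') : M.rel B h.last h'.last := by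
  have hfirst : h'.first = h.first :=
    (histRel_char hM (hr hB.choose hB.choose_spec)).1
  have hch : ∀ a ∈ B, ∃ c : List (Finset A × W), c <+: h.steps ∧ c <+: h'.steps ∧
      (∀ e ∈ h.steps.drop c.length, a ∈ e.1) ∧
      (∀ e ∈ h'.steps.drop c.length, a ∈ e.1) :=
    fun a ha => (histRel_char hM (hr a ha)).2.2
  set g : A → List (Finset A × W) := fun a =>
    if ha : a ∈ B then (hch a ha).choose else [] with hg
  obtain ⟨a₀, ha₀, hmax⟩ := Finset.exists_max_image B (fun a => (g a).length) hB
  set c := g a₀ with hc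
  have hcs : c <+: h.steps ∧ c <+: h'.steps ∧
      (∀ e ∈ h.steps.drop c.length, a₀ ∈ e.1) ∧
      (∀ e ∈ h'.steps.drop c.length, a₀ ∈ e.1) := by
    rw [hc, hg]; simp only [ha₀, dif_pos]
    exact (hch a₀ ha₀).choose_spec
  have hlab : ∀ (l : List (Finset A × W)), (∀ a ∈ B, ∀ e ∈ l.drop ((g a).length), a ∈ e.1) →
      ∀ e ∈ l.drop c.length, B ⊆ e.1 := by
    intro l hl e he a ha
    refine hl a ha e ?_
    have h1 : l.drop c.length = (l.drop ((g a).length)).drop (c.length - (g a).length) := by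
      rw [List.drop_drop]
      congr 1
      have := hmax a ha
      omega
    rw [h1] at he
    exact List.mem_of_mem_drop he
  have hlab1 : ∀ e ∈ h.steps.drop c.length, B ⊆ e.1 := by
    refine hlab h.steps ?_
    intro a ha
    have := (hch a ha).choose_spec
    simpa [hg, ha] using this.2.2.1
  have hlab2 : ∀ e ∈ h'.steps.drop c.length, B ⊆ e.1 := by
    refine hlab h'.steps ?_
    intro a ha
    have := (hch a ha).choose_spec
    simpa [hg, ha] using this.2.2.2
  obtain ⟨hpre1, hpre2, _, _⟩ := hcs
  set mid := ((c.map Prod.snd).getLastD h.first) with hmid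
  set d1 := h.steps.drop c.length with hd1
  set d2 := h'.steps.drop c.length with hd2
  have hsplit1 : h.steps = c ++ d1 := by
    rw [hd1]
    conv_lhs => rw [← List.take_append_drop c.length h.steps]
    rw [(List.prefix_iff_eq_take.mp hpre1).symm]
  have hsplit2 : h'.steps = c ++ d2 := by
    rw [hd2]
    conv_lhs => rw [← List.take_append_drop c.length h'.steps]
    rw [(List.prefix_iff_eq_take.mp hpre2).symm]
  have hh1 : IsHist M mid d1 := by
    have := h.valid
    rw [hsplit1, isHist_append] at this
    exact this.2
  have hh2 : IsHist M mid d2 := by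
    have := h'.valid
    rw [hsplit2, isHist_append] at this
    rw [hmid, ← hfirst]
    exact this.2
  have hlast1 : h.last = (d1.map Prod.snd).getLastD mid := hist_last_eq h hsplit1
  have hlast2 : h'.last = (d2.map Prod.snd).getLastD mid := by
    have := hist_last_eq h' hsplit2
    rw [this, hfirst]
  have hrelB : M.rel {hB.choose} h.last h.last := rel_self_of_histRel hM (hr _ hB.choose_spec)
  by_cases he1 : d1 = []
  · by_cases he2 : d2 = []
    · -- h.last = h'.last, use singleton fold
      have : h'.last = h.last := by
        rw [hlast1, hlast2, he1, he2]
      rw [this]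
      refine rel_singleton_fold hM hB ?_
      intro a ha
      exact rel_self_of_histRel hM (hr a ha)
    · have hch2 := chain_rel hM B d2 mid he2 hh2 hlab2
      rw [hlast1, hlast2, he1]
      simpa using hch2
  · have hch1 := chain_rel hM B d1 mid he1 hh1 hlab1
    rw [← hlast1] at hch1
    by_cases he2 : d2 = []
    · have : h'.last = mid := by rw [hlast2, he2]; rfl
      rw [this]
      exact hM.1 B hch1
    · have hch2 := chain_rel hM B d2 mid he2 hh2 hlab2
      rw [← hlast2] at hch2
      exact hM.2.1 B (hM.1 B hch1) hch2

theorem unravel_PE (hM : M.IsPseudo) : (unravel M).IsPE := by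
  intro a
  constructor
  · intro h h' hr
    have hsymm : Symmetric (fun h h' => histStep M a h h' ∨ histStep M a h' h) :=
      fun _ _ hh => hh.symm
    exact hr.head_induction_on (fun hh => Relation.TransGen.single (hsymm hh))
      (fun hh _ ih => Relation.TransGen.tail ih (hsymm hh))
  · intro h1 h2 h3 ha hb
    exact Relation.TransGen.trans ha hb

theorem unravel_live (hM : M.IsPseudo) (h : Hist M) :
    (unravel M).live h = {a | M.rel {a} h.last h.last} := by
  ext a
  constructor
  · intro hr
    exact rel_self_of_histRel hM hr
  · intro hrel
    exact histRel_self hM hrel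

theorem unravel_truth (hM : M.IsPseudo) : ∀ (φ : Form A AP) (h : Hist M),
    (unravel M).sat h φ ↔ M.sat h.last φ := by
  intro φ
  induction φ with
  | atom p => intro h; rfl
  | neg ψ ih => intro h; simp only [PEData.sat, PseudoData.sat, ih]
  | and ψ χ ih1 ih2 => intro h; simp only [PEData.sat, PseudoData.sat, ih1, ih2]
  | dk B hB ψ ih =>
    intro h
    constructor
    · intro hs w' hrel
      have := hs (histExt h B w' hrel) ?_
      · rw [ih, histExt_last] at this
        exact this
      · intro a ha
        exact histRel_of_rel ha hrel
    · intro hs h'' hrel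
      rw [ih]
      exact hs h''.last (histRel_rel hM hB hrel)

end Aux

end Aux5
section Aux6

attribute [local instance] Classical.propDecidable
set_option linter.unusedSectionVars false

variable {A AP W : Type} [Fintype A] {M : PEData A AP W}

namespace Aux

theorem rel_left (hPE : M.IsPE) {a : A} {w w' : W} (h : M.rel a w w') : M.rel a w w :=
  (hPE a).2 h ((hPE a).1 h)

theorem rel_right (hPE : M.IsPE) {a : A} {w w' : W} (h : M.rel a w w') : M.rel a w' w' :=
  (hPE a).2 ((hPE a).1 h) h

theorem class_eq (hPE : M.IsPE) {a : A} {w w' : W} (h : M.rel a w w') :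
    {u | M.rel a w u} = {u | M.rel a w' u} := by
  ext u
  exact ⟨fun hu => (hPE a).2 ((hPE a).1 h) hu, fun hu => (hPE a).2 h hu⟩

theorem mem_sigmaWorld {v : sigmaVert M} {w : W} :
    v ∈ sigmaWorld M w ↔ (M.rel v.1.1 w w ∧ v.1.2 = {w' | M.rel v.1.1 w w'}) := by
  constructor
  · intro hv
    have hv := Finset.mem_image.mp hv
    obtain ⟨a, _, rfl⟩ := hv
    have ha := (Finset.mem_filter.mp a.2).2
    exact ⟨ha, rfl⟩
  · intro ⟨h1, h2⟩
    refine Finset.mem_image.mpr ?_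
    refine ⟨⟨v.1.1, Finset.mem_filter.mpr ⟨Finset.mem_univ _, h1⟩⟩, Finset.mem_attach _ _, ?_⟩
    exact Subtype.ext (Prod.ext rfl h2.symm)

/-- The canonical vertex of colour `a` at world `w`. -/
def vert (a : A) (w : W) (h : M.rel a w w) : sigmaVert M :=
  ⟨(a, {w' | M.rel a w w'}), ⟨w, h, rfl⟩⟩

theorem vert_mem {a : A} {w : W} (h : M.rel a w w) : vert a w h ∈ sigmaWorld M w :=
  mem_sigmaWorld.mpr ⟨h, rfl⟩

theorem sigmaWorld_nonempty (hNE : M.NoEmptyWorld) (w : W) : (sigmaWorld M w).Nonempty := by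
  obtain ⟨a, ha⟩ := hNE w
  exact ⟨vert a w ha, vert_mem ha⟩

theorem sigmaWorld_mem_S (hNE : M.NoEmptyWorld) (w : W) :
    sigmaWorld M w ∈ (sigmaModel M).S :=
  ⟨sigmaWorld_nonempty hNE w, w, le_refl _⟩

theorem sigmaWorld_subset (hPE : M.IsPE) {w w' : W} :
    sigmaWorld M w ⊆ sigmaWorld M w' ↔ (∀ a, M.rel a w w → M.rel a w w') := by
  constructor
  · intro hsub a ha
    have hv := hsub (vert_mem ha)
    rw [mem_sigmaWorld] at hv
    obtain ⟨h1, h2⟩ := hv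
    have h1' : M.rel a w' w' := h1
    have h2' : {u | M.rel a w u} = {u | M.rel a w' u} := h2
    have hw' : w' ∈ {u | M.rel a w u} := by rw [h2']; exact h1'
    exact hw'
  · intro h v hv
    rw [mem_sigmaWorld] at hv ⊢
    obtain ⟨h1, h2⟩ := hv
    have h3 := h v.1.1 h1
    exact ⟨rel_right hPE h3, by rw [h2]; exact class_eq hPE h3⟩

end Aux

end Aux6
section Aux7

attribute [local instance] Classical.propDecidable
set_option linter.unusedSectionVars false

variable {A AP W : Type} [Fintype A] {M : PEData A AP W}

namespace Aux

theorem pequiv_of_eq (hPE : M.IsPE) {w w' : W}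
    (h : sigmaWorld M w = sigmaWorld M w') : pequiv M w w' := by
  have h1 := (sigmaWorld_subset (M := M) hPE).mp h.le
  have h2 := (sigmaWorld_subset (M := M) hPE).mp h.ge
  constructor
  · ext a
    exact ⟨fun ha => rel_right hPE (h1 a ha), fun ha => rel_right hPE (h2 a ha)⟩
  · intro a ha
    exact h1 a ha

theorem eq_of_pequiv (hPE : M.IsPE) {w w' : W} (h : pequiv M w w') :
    sigmaWorld M w = sigmaWorld M w' := by
  apply Finset.Subset.antisymm
  · rw [sigmaWorld_subset hPE]
    intro a ha
    exact h.2 a ha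
  · rw [sigmaWorld_subset hPE]
    intro a ha
    have : a ∈ M.live w := by rw [h.1]; exact ha
    exact (hPE a).1 (h.2 a this)

theorem sigma_inter (hPE : M.IsPE) {B : Finset A} {w w' : W} :
    ((↑B : Set A) ⊆ (sigmaModel M).chi ''
      ((↑(sigmaWorld M w) : Set (sigmaVert M)) ∩ ↑(sigmaWorld M w'))) ↔
    ∀ a ∈ B, M.rel a w w' := by
  constructor
  · intro h a ha
    obtain ⟨v, ⟨hv1, hv2⟩, hchi⟩ := h (Finset.mem_coe.mpr ha)
    rw [Finset.mem_coe, mem_sigmaWorld] at hv1 hv2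
    have hchi' : v.1.1 = a := hchi
    subst hchi'
    have hw' : w' ∈ v.1.2 := by rw [hv2.2]; exact hv2.1
    rw [hv1.2] at hw'
    exact hw'
  · intro h a ha
    have hrel := h a (Finset.mem_coe.mp ha)
    refine ⟨vert a w (rel_left hPE hrel), ⟨?_, ?_⟩, rfl⟩
    · exact Finset.mem_coe.mpr (vert_mem (rel_left hPE hrel))
    · refine Finset.mem_coe.mpr (mem_sigmaWorld.mpr ⟨?_, ?_⟩)
      · exact rel_right hPE hrel
      · exact class_eq hPE hrel

theorem sigma_isModel (hPE : M.IsPE) (hNE : M.NoEmptyWorld) :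
    (sigmaModel M).IsModel := by
  refine ⟨⟨?_, ?_, ?_, ?_⟩, ?_, ?_⟩
  · intro X hX; exact hX.1
  · intro v
    obtain ⟨w, hw, hcl⟩ := v.2
    refine ⟨by simp, w, ?_⟩
    intro u hu
    rw [Finset.mem_singleton] at hu
    subst hu
    exact mem_sigmaWorld.mpr ⟨hw, hcl⟩
  · intro X hX Y hY hYne
    exact ⟨hYne, hX.2.choose, hY.trans hX.2.choose_spec⟩
  · intro X hX v hv u hu hchi
    obtain ⟨w, hw⟩ := hX.2
    have h1 := mem_sigmaWorld.mp (hw hv)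
    have h2 := mem_sigmaWorld.mp (hw hu)
    have hchi' : v.1.1 = u.1.1 := hchi
    refine Subtype.ext (Prod.ext hchi' ?_)
    rw [h1.2, h2.2, hchi']
  · intro X hX
    obtain ⟨w, hw⟩ := hX.1.2
    exact ⟨w, hX.2 _ (sigmaWorld_mem_S hNE w) hw⟩
  · intro X hX
    obtain ⟨w, rfl⟩ := hX
    exact sigmaWorld_mem_S hNE w

theorem sigma_truth (hPE : M.IsPE) (hNE : M.NoEmptyWorld)
    (hHL : ∀ w w', pequiv M w w' → M.label w = M.label w') :
    ∀ (φ : Form A AP) (w : W),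
      (sigmaModel M).sat (sigmaWorld M w) φ ↔ M.sat w φ := by
  intro φ
  induction φ with
  | atom p =>
    intro w
    show p ∈ (sigmaModel M).label (sigmaWorld M w) ↔ p ∈ M.label w
    constructor
    · intro ⟨u, hequ, hp⟩
      rw [hHL w u (pequiv_of_eq hPE hequ)]
      exact hp
    · intro hp
      exact ⟨w, rfl, hp⟩
  | neg ψ ih => intro w; simp only [SimpData.sat, PEData.sat, ih]
  | and ψ χ ih1 ih2 => intro w; simp only [SimpData.sat, PEData.sat, ih1, ih2]
  | dk B hB ψ ih =>
    intro w
    constructor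
    · intro hs u hrel
      rw [← ih u]
      exact hs (sigmaWorld M u) ⟨u, rfl⟩ ((sigma_inter hPE).mpr hrel)
    · intro hs X' hX' hcond
      obtain ⟨u, rfl⟩ := hX'
      rw [ih u]
      exact hs u ((sigma_inter hPE).mp hcond)

theorem sigma_minimal (hPE : M.IsPE) (hNE : M.NoEmptyWorld) (hMin : M.Minimal) :
    (sigmaModel M).Minimal := by
  intro X
  constructor
  · rintro ⟨u, rfl⟩
    refine ⟨sigmaWorld_mem_S hNE u, ?_⟩
    rintro Y ⟨hYne, w', hYw'⟩ hsub
    have hsub2 : sigmaWorld M u ⊆ sigmaWorld M w' := hsub.trans hYw'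
    rw [sigmaWorld_subset hPE] at hsub2
    have hlive : M.live u ⊆ M.live w' := by
      intro a ha
      exact rel_right hPE (hsub2 a ha)
    have hlive2 : M.live u = M.live w' := by
      by_contra hne
      obtain ⟨a, ha, hnr⟩ := hMin u w' (ssubset_of_ne_of_subset hne hlive)
      exact hnr (hsub2 a ha)
    have hXeq : sigmaWorld M u = sigmaWorld M w' := by
      refine eq_of_pequiv hPE ⟨hlive2, ?_⟩
      intro a ha
      exact hsub2 a ha
    apply Finset.Subset.antisymm hsub
    rw [← hXeq] at hYw'
    exact hYw'
  · intro hF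
    obtain ⟨w, hw⟩ := hF.1.2
    have := hF.2 _ (sigmaWorld_mem_S hNE w) hw
    exact ⟨w, this⟩

theorem sigma_maximal (hPE : M.IsPE) (hNE : M.NoEmptyWorld) (hMax : M.Maximal) :
    (sigmaModel M).Maximal := by
  apply Set.Subset.antisymm
  · rintro X ⟨w, rfl⟩
    exact sigmaWorld_mem_S hNE w
  · rintro X ⟨hXne, w, hXw⟩
    set Bs : Set A := (fun v : sigmaVert M => v.1.1) '' ↑X with hBs
    have hBsne : Bs.Nonempty := hXne.to_set.image _
    have hBsub : Bs ⊆ M.live w := by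
      rintro a ⟨v, hv, rfl⟩
      exact (mem_sigmaWorld.mp (hXw hv)).1
    -- key: if `live u = Bs` and `∀ a ∈ Bs, rel a u w` then `X = sigmaWorld M u`
    have hkey : ∀ u : W, M.live u = Bs → (∀ a ∈ Bs, M.rel a u w) →
        X = sigmaWorld M u := by
      intro u hlive hrel
      apply Finset.Subset.antisymm
      · intro v hv
        have hvw := mem_sigmaWorld.mp (hXw hv)
        have ha : v.1.1 ∈ Bs := ⟨v, hv, rfl⟩
        have hr : M.rel v.1.1 u w := hrel _ ha
        refine mem_sigmaWorld.mpr ⟨rel_left hPE hr, ?_⟩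
        rw [hvw.2, class_eq hPE hr]
      · intro v hv
        have hvu := mem_sigmaWorld.mp hv
        have ha : v.1.1 ∈ Bs := by rw [← hlive]; exact hvu.1
        obtain ⟨v', hv', hchi⟩ := ha
        have hchi2 : v'.1.1 = v.1.1 := hchi
        have hv'w := mem_sigmaWorld.mp (hXw hv')
        have hr : M.rel v.1.1 u w := hrel _ (by rw [← hlive]; exact hvu.1)
        have : v = v' := by
          refine Subtype.ext (Prod.ext hchi2.symm ?_)
          rw [hvu.2, hv'w.2, hchi2, class_eq hPE hr]
        rw [this]
        exact hv'
    by_cases hBfull : Bs = M.live w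
    · refine ⟨w, hkey w hBfull.symm ?_⟩
      intro a ha
      rw [hBfull] at ha
      exact ha
    · have hss : Bs ⊂ M.live w := ssubset_of_ne_of_subset hBfull hBsub
      obtain ⟨u, hulive, hurel⟩ := hMax w Bs hBsne hss
      exact ⟨u, hkey u hulive hurel⟩

end Aux

end Aux7
section Aux8

attribute [local instance] Classical.propDecidable
set_option linter.unusedSectionVars false

variable {A AP : Type} [Fintype A] [Nonempty AP] {Ax : Form A AP → Prop}

namespace Aux

/-- notation shortcut -/
local notation "Mc" => canonicalPsm A AP (Prf Ax)

theorem rel_singleton_iff (h : Hist (Mc)) (a : A) :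
    (Mc).rel {a} h.last h.last ↔ Form.deadAgent a ∉ h.last.1 := by
  rw [← alive_iff_rel (Finset.singleton_nonempty a), ← mcs_neg h.last.2]
  rfl

theorem U_live (h : Hist (Mc)) :
    (unravel (Mc)).live h = {a | Form.deadAgent a ∉ h.last.1} := by
  rw [unravel_live canonical_pseudo h]
  ext a
  exact rel_singleton_iff h a

theorem U_NE : (unravel (Mc)).NoEmptyWorld := by
  intro h
  obtain ⟨a, ha⟩ := canonical_NE h.last
  rw [U_live h]
  exact ⟨a, (mcs_neg h.last.2 _).mp ha⟩

/-- The finset of live agents at (the endpoint of) a history. -/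
noncomputable def liveF (h : Hist (Mc)) : Finset A :=
  Finset.univ.filter (fun a => (Mc).rel {a} h.last h.last)

theorem liveF_coe (h : Hist (Mc)) : (↑(liveF h) : Set A) = (unravel (Mc)).live h := by
  rw [unravel_live canonical_pseudo h]
  ext a
  simp [liveF]

theorem liveF_nonempty (h : Hist (Mc)) : (liveF h).Nonempty := by
  obtain ⟨a, ha⟩ := U_NE h
  refine ⟨a, ?_⟩
  have : a ∈ (↑(liveF h) : Set A) := by rw [liveF_coe]; exact ha
  exact this

theorem mcs_deadGrp {Γ : Set (Form A AP)} (hΓ : MaxConsistent (Prf Ax) Γ) (C : Finset A) :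
    Form.deadGrp C ∈ Γ ↔ ∀ a ∈ C, Form.deadAgent a ∈ Γ := by
  rw [Form.deadGrp, mcs_bigAnd hΓ]
  constructor
  · intro h a ha
    exact h _ (List.mem_map.mpr ⟨a, Finset.mem_toList.mpr ha, rfl⟩)
  · intro h γ hγ
    obtain ⟨a, ha, rfl⟩ := List.mem_map.mp hγ
    exact h a (Finset.mem_toList.mp ha)

theorem alive_liveF (h : Hist (Mc)) :
    Form.aliveGrp (liveF h) (liveF_nonempty h) ∈ h.last.1 := by
  refine (alive_iff_rel (liveF_nonempty h)).mpr ?_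
  refine rel_singleton_fold canonical_pseudo (liveF_nonempty h) ?_
  intro a ha
  exact (Finset.mem_filter.mp ha).2

theorem dead_compl_liveF (h : Hist (Mc)) : Form.deadGrp (liveF h)ᶜ ∈ h.last.1 := by
  rw [mcs_deadGrp h.last.2]
  intro a ha
  rw [Finset.mem_compl, liveF] at ha
  simp only [Finset.mem_filter, Finset.mem_univ, true_and] at ha
  by_contra hd
  exact ha ((rel_singleton_iff h a).mpr ((mcs_neg h.last.2 _).mp
    ((mcs_neg h.last.2 _).mpr hd)))

theorem U_HL (h h' : Hist (Mc)) (hpe : pequiv (unravel (Mc)) h h') :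
    (unravel (Mc)).label h = (unravel (Mc)).label h' := by
  have hlast : h.last = h'.last := by
    set B := liveF h with hBdef
    have hB : B.Nonempty := liveF_nonempty h
    have hrelBB : (Mc).rel B h.last h'.last := by
      refine histRel_rel canonical_pseudo hB ?_
      intro a ha
      have : a ∈ (unravel (Mc)).live h := by rw [← liveF_coe]; exact ha
      exact hpe.2 a this
    have hdeadΔ : Form.deadGrp Bᶜ ∈ h'.last.1 := by
      rw [mcs_deadGrp h'.last.2]
      intro a ha
      rw [Finset.mem_compl] at ha
      have hnl : a ∉ (unravel (Mc)).live h' := by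
        rw [← hpe.1, ← liveF_coe]
        exact ha
      rw [U_live h'] at hnl
      simpa using hnl
    have hsub : h.last.1 ⊆ h'.last.1 := by
      intro φ hφ
      have hax := thm_mem h.last.2 (Prf.axP (φ := φ) B hB)
      have hante : ((Form.aliveGrp B hB).and (Form.deadGrp Bᶜ)).and φ ∈ h.last.1 := by
        refine (mcs_and h.last.2 _ _).mpr ⟨(mcs_and h.last.2 _ _).mpr ⟨?_, ?_⟩, hφ⟩
        · exact alive_liveF h
        · exact dead_compl_liveF h
      have hdk : Form.dk B hB ((Form.deadGrp Bᶜ).imp φ) ∈ h.last.1 :=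
        mcs_mp h.last.2 hax hante
      have himp : (Form.deadGrp Bᶜ).imp φ ∈ h'.last.1 := hrelBB hB _ hdk
      exact mcs_mp h'.last.2 himp hdeadΔ
    -- two MCS with one included in the other are equal
    refine Subtype.ext (Set.Subset.antisymm hsub ?_)
    intro φ hφ
    by_contra hc
    have : φ.neg ∈ h.last.1 := (mcs_neg h.last.2 φ).mpr hc
    exact absurd hφ ((mcs_neg h'.last.2 φ).mp (hsub this))
  show (Mc).label h.last = (Mc).label h'.last
  rw [hlast]

theorem U_min : (unravel (canonicalPsm A AP (Prf (MinAx (A := A) (AP := AP))))).Minimal := by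
  intro h h' hss
  by_contra hc
  push_neg at hc
  set B := liveF (Ax := MinAx) h with hBdef
  have hB : B.Nonempty := liveF_nonempty h
  have hrelBB : (canonicalPsm A AP (Prf MinAx)).rel B h.last h'.last := by
    refine histRel_rel canonical_pseudo hB ?_
    intro a ha
    have ha' : a ∈ (unravel (canonicalPsm A AP (Prf MinAx))).live h := by
      rw [← liveF_coe]; exact ha
    exact hc a ha'
  have hne : B ≠ Finset.univ := by
    obtain ⟨a, ha', hna⟩ := Set.exists_of_ssubset hss
    intro he
    refine hna ?_
    have : a ∈ (↑B : Set A) := by rw [he]; simp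
    rw [liveF_coe] at this
    exact this
  have hax : Prf (MinAx (A := A) (AP := AP))
      (((Form.aliveGrp B hB).and (Form.deadGrp Bᶜ)).imp (Form.dk B hB (Form.deadGrp Bᶜ))) :=
    Prf.extra ⟨B, hB, hne, rfl⟩
  have hdk : Form.dk B hB (Form.deadGrp Bᶜ) ∈ h.last.1 :=
    mcs_mp h.last.2 (thm_mem h.last.2 hax)
      ((mcs_and h.last.2 _ _).mpr ⟨alive_liveF h, dead_compl_liveF h⟩)
  have hdead : Form.deadGrp Bᶜ ∈ h'.last.1 := hrelBB hB _ hdk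
  obtain ⟨a, ha', hna⟩ := Set.exists_of_ssubset hss
  have haB : a ∉ B := by
    intro hmem
    refine hna ?_
    have : a ∈ (↑B : Set A) := hmem
    rw [liveF_coe] at this
    exact this
  rw [U_live] at ha'
  refine ha' ?_
  exact (mcs_deadGrp h'.last.2 _).mp hdead a (Finset.mem_compl.mpr haB)

theorem U_max : (unravel (canonicalPsm A AP (Prf (MaxAx (A := A) (AP := AP))))).Maximal := by
  intro h' Bs hBsne hss
  set B : Finset A := (Set.toFinite Bs).toFinset with hBdef
  have hBcoe : (↑B : Set A) = Bs := by rw [hBdef, Set.Finite.coe_toFinset]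
  have hB : B.Nonempty := by
    obtain ⟨a, ha⟩ := hBsne
    exact ⟨a, by rw [← Finset.mem_coe, hBcoe]; exact ha⟩
  have hlive : ∀ a ∈ B, (canonicalPsm A AP (Prf MaxAx)).rel {a} h'.last h'.last := by
    intro a ha
    have : a ∈ Bs := by rw [← hBcoe]; exact ha
    have := hss.1 this
    rw [unravel_live canonical_pseudo] at this
    exact this
  have halive : Form.aliveGrp B hB ∈ h'.last.1 :=
    (alive_iff_rel hB).mpr (rel_singleton_fold canonical_pseudo hB hlive)
  have hne : B ≠ Finset.univ := by
    obtain ⟨a, ha', hna⟩ := Set.exists_of_ssubset hss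
    intro he
    refine hna ?_
    rw [← hBcoe, he]
    simp
  have hax : Prf (MaxAx (A := A) (AP := AP))
      ((Form.aliveGrp B hB).imp (Form.neg (Form.dk B hB (Form.neg (Form.deadGrp Bᶜ))))) :=
    Prf.extra ⟨B, hB, hne, rfl⟩
  have hnot : Form.dk B hB (Form.neg (Form.deadGrp Bᶜ)) ∉ h'.last.1 :=
    (mcs_neg h'.last.2 _).mp (mcs_mp h'.last.2 (thm_mem h'.last.2 hax) halive)
  obtain ⟨Δ, hrel, hndead⟩ := exists_succ hnot
  have hdead : Form.deadGrp Bᶜ ∈ Δ.1 := by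
    by_contra hcon
    exact hndead ((mcs_neg Δ.2 _).mpr hcon)
  have hrelsym : (canonicalPsm A AP (Prf MaxAx)).rel B Δ h'.last :=
    canonical_pseudo.1 B hrel
  have hrelΔΔ : (canonicalPsm A AP (Prf MaxAx)).rel B Δ Δ :=
    canonical_pseudo.2.1 B hrelsym hrel
  have hstep : (canonicalPsm A AP (Prf MaxAx)).rel B h'.last Δ := hrel
  set h : Hist (canonicalPsm A AP (Prf MaxAx)) := histExt h' B Δ hstep with hdef
  have hlast : h.last = Δ := histExt_last h' B Δ hstep
  refine ⟨h, ?_, ?_⟩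
  · rw [unravel_live canonical_pseudo, hlast, ← hBcoe]
    ext a
    simp only [Set.mem_setOf_eq, Finset.coe_filter]
    constructor
    · intro hr
      by_contra haB
      have : Form.deadAgent a ∈ Δ.1 :=
        (mcs_deadGrp Δ.2 _).mp hdead a (Finset.mem_compl.mpr haB)
      exact absurd this ((mcs_neg Δ.2 _).mp ((alive_iff_rel
        (Finset.singleton_nonempty a)).mpr hr))
    · intro haB
      exact canonical_pseudo.2.2.1 {a} B (Finset.singleton_subset_iff.mpr haB) _ _ hrelΔΔ
  · intro a ha
    have haB : a ∈ B := by rw [← hBcoe] at ha; exact ha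
    exact Relation.TransGen.single (Or.inr (histExt_step h' B Δ haB hstep))

theorem consistent_neg {φ : Form A AP} (h : ¬ Prf Ax φ) :
    ConsistentSet (Prf Ax) {φ.neg} := by
  intro ⟨L, hL, hP⟩
  refine h (Aux.tc1 ?_ hP)
  intro v hn ha
  simp only [Aux.vImp v hn ha, Aux.vBigAnd v hn ha]
  intro h1
  by_contra hv
  refine Aux.vFalsum v hn ha (h1 ?_)
  intro γ hγ
  have := hL γ hγ
  rw [Set.mem_singleton_iff] at this
  subst this
  rw [hn]
  exact hv

end Aux

end Aux8
/-- Completeness of `SCmin` and `SCmax`: validity in every minimal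
(resp. maximal) simplicial model implies provability in `SCmin` (resp. `SCmax`). -/
theorem completeness_SCmin_SCmax (A AP : Type) [Fintype A] [Nonempty AP] :
    (∀ φ : Form A AP,
      (∀ (V : Type) (C : SimpData A AP V), C.IsModel → C.Minimal →
        ∀ w ∈ C.Wld, C.sat w φ) →
      SCmin φ) ∧
    (∀ φ : Form A AP,
      (∀ (V : Type) (C : SimpData A AP V), C.IsModel → C.Maximal →
        ∀ w ∈ C.Wld, C.sat w φ) →
      SCmax φ) := by
  constructor
  · intro φ hvalid
    by_contra hnp
    obtain ⟨Γ, hΓsub, hΓ⟩ := Aux.lindenbaum (Aux.consistent_neg hnp)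
    set Γ' : {Γ : Set (Form A AP) // MaxConsistent (Prf MinAx) Γ} := ⟨Γ, hΓ⟩ with hΓ'
    set h₀ : Hist (canonicalPsm A AP (Prf MinAx)) := ⟨Γ', [], trivial⟩ with hh
    have hPE := Aux.unravel_PE (Aux.canonical_pseudo (Ax := MinAx (A := A) (AP := AP)))
    have hNE := Aux.U_NE (Ax := MinAx (A := A) (AP := AP))
    have hsat := hvalid _ (sigmaModel (unravel (canonicalPsm A AP (Prf MinAx))))
      (Aux.sigma_isModel hPE hNE)
      (Aux.sigma_minimal hPE hNE Aux.U_min)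
      (sigmaWorld _ h₀) ⟨h₀, rfl⟩
    rw [Aux.sigma_truth hPE hNE Aux.U_HL φ h₀,
        Aux.unravel_truth Aux.canonical_pseudo φ h₀,
        Aux.canonical_truth φ h₀.last] at hsat
    have hneg : φ.neg ∈ Γ := hΓsub rfl
    exact (Aux.mcs_neg hΓ φ).mp hneg hsat
  · intro φ hvalid
    by_contra hnp
    obtain ⟨Γ, hΓsub, hΓ⟩ := Aux.lindenbaum (Aux.consistent_neg hnp)
    set Γ' : {Γ : Set (Form A AP) // MaxConsistent (Prf MaxAx) Γ} := ⟨Γ, hΓ⟩ with hΓ'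
    set h₀ : Hist (canonicalPsm A AP (Prf MaxAx)) := ⟨Γ', [], trivial⟩ with hh
    have hPE := Aux.unravel_PE (Aux.canonical_pseudo (Ax := MaxAx (A := A) (AP := AP)))
    have hNE := Aux.U_NE (Ax := MaxAx (A := A) (AP := AP))
    have hsat := hvalid _ (sigmaModel (unravel (canonicalPsm A AP (Prf MaxAx))))
      (Aux.sigma_isModel hPE hNE)
      (Aux.sigma_maximal hPE hNE Aux.U_max)
      (sigmaWorld _ h₀) ⟨h₀, rfl⟩
    rw [Aux.sigma_truth hPE hNE Aux.U_HL φ h₀,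
        Aux.unravel_truth Aux.canonical_pseudo φ h₀,
        Aux.canonical_truth φ h₀.last] at hsat
    have hneg : φ.neg ∈ Γ := hΓsub rfl
    exact (Aux.mcs_neg hΓ φ).mp hneg hsat
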